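/- For every non-negative integer n and nonzero complex a, the sum ∑_{j=0}^{2n+1} (-2/a)^j · η(-j, (a+1)/2) / ((2n+1-j)! · j!) equals 0, where η(-j, z) = E(j, z)/2 is half the j-th Euler polynomial. -/

import Mathlib

open Polynomial Finset



/-- The `n`-th Euler polynomial (as a function `ℂ → ℂ`), defined via Bernoulli
polynomials by `E_n(x) = 2^{n+1}/(n+1) * (B_{n+1}((x+1)/2) - B_{n+1}(x/2))`,
which is equivalent to the generating function `2 e^{xt}/(e^t+1) = ∑ E_n(x) t^n/n!`. -/
noncomputable def eulerPoly (n : ℕ) (x : ℂ) : ℂ :=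
  (2 : ℂ) ^ (n + 1) / (n + 1) *
    (Polynomial.aeval ((x + 1) / 2) (Polynomial.bernoulli (n + 1)) -
     Polynomial.aeval (x / 2) (Polynomial.bernoulli (n + 1)))

/-- The `n`-th Euler number, `E_n = 2^n E_n(1/2)`. -/
noncomputable def eulerNumber (n : ℕ) : ℂ := 2 ^ n * eulerPoly n (1 / 2)



open Polynomial Finset

lemma poly_eq_of_deriv {R} [CommRing R] [IsAddTorsionFree R] {f g : R[X]}
    (h : Polynomial.derivative f = Polynomial.derivative g) (h0 : f.coeff 0 = g.coeff 0) :
    f = g := by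
  have hd : Polynomial.derivative (f - g) = 0 := by rw [derivative_sub, h, sub_self]
  have h2 := Polynomial.eq_C_of_derivative_eq_zero hd
  rw [coeff_sub, h0, sub_self, map_zero] at h2
  exact sub_eq_zero.mp h2

lemma bernoulli_comp_one_sub (n : ℕ) :
    (Polynomial.bernoulli n).comp (1 - X) = C ((-1 : ℚ)^n) * Polynomial.bernoulli n := by
  induction n with
  | zero => simp [Polynomial.bernoulli_zero]
  | succ n ih =>
    apply poly_eq_of_deriv
    · rw [derivative_comp, Polynomial.derivative_bernoulli_add_one, derivative_mul]
      rw [mul_comp, add_comp, natCast_comp, one_comp, ih, derivative_C,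
        Polynomial.derivative_bernoulli_add_one]
      simp only [derivative_sub, derivative_one, derivative_X, map_pow, map_neg, map_one,
        zero_mul, zero_add, zero_sub]
      ring
    · simp only [coeff_zero_eq_eval_zero, eval_comp, eval_sub, eval_one, eval_X, sub_zero,
        eval_mul, eval_C, Polynomial.bernoulli_eval_one, Polynomial.bernoulli_eval_zero]
      rw [_root_.bernoulli, ← mul_assoc, ← mul_pow]
      simp

lemma bernoulli_map_comp_add (n : ℕ) (y : ℂ) :
    ((Polynomial.bernoulli n).map (algebraMap ℚ ℂ)).comp (X + C y) =
      ∑ k ∈ range (n + 1),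
        C ((n.choose k : ℂ) * aeval y (Polynomial.bernoulli k)) * X ^ (n - k) := by
  induction n with
  | zero => simp [Polynomial.bernoulli_zero]
  | succ n ih =>
    apply poly_eq_of_deriv
    · rw [derivative_comp, derivative_map, Polynomial.derivative_bernoulli_add_one,
        Polynomial.map_mul, Polynomial.map_add, Polynomial.map_natCast, Polynomial.map_one,
        mul_comp, add_comp, natCast_comp, one_comp, ih]
      rw [derivative_sum]
      conv_rhs => rw [Finset.sum_range_succ]
      rw [show n + 1 - (n + 1) = 0 from Nat.sub_self _]
      simp only [pow_zero, mul_one, derivative_C, add_zero]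
      rw [derivative_add, derivative_X, derivative_C, add_zero, one_mul, Finset.mul_sum]
      refine Finset.sum_congr rfl fun k hk => ?_
      have hkn : k ≤ n := Nat.lt_succ_iff.mp (Finset.mem_range.mp hk)
      rw [derivative_mul, derivative_C, zero_mul, zero_add, derivative_X_pow]
      have h2 : n + 1 - k - 1 = n - k := by omega
      rw [h2]
      have h : ((n.choose k : ℂ) * (n + 1)) = ((n + 1).choose k : ℂ) * ((n + 1 - k : ℕ) : ℂ) := by
        exact_mod_cast congrArg (Nat.cast : ℕ → ℂ) (Nat.choose_mul_succ_eq n k)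
      have hC : ((n : ℂ[X]) + 1) = C ((n : ℂ) + 1) := by
        rw [map_add, map_one, Polynomial.C_eq_natCast]
      have hh : (C ((n : ℂ) + 1)) * C ((n.choose k : ℂ)) =
          C (((n + 1).choose k : ℂ)) * C (((n + 1 - k : ℕ) : ℂ)) := by
        rw [← C_mul, ← C_mul]; exact congrArg C (by linear_combination h)
      rw [hC]
      simp only [C_mul]
      linear_combination (C (aeval y (Polynomial.bernoulli k)) * X ^ (n - k)) * hh
    · simp only [coeff_zero_eq_eval_zero, eval_comp, eval_add, eval_X, eval_C, zero_add,
        Polynomial.eval_finset_sum, eval_mul, eval_pow]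
      rw [Finset.sum_range_succ]
      rw [Finset.sum_eq_zero (fun k hk => by
        have : n + 1 - k ≠ 0 := by have := Finset.mem_range.mp hk; omega
        simp [zero_pow this])]
      simp [eval_map, ← aeval_def]

lemma bernoulli_aeval_add (n : ℕ) (x y : ℂ) :
    aeval (x + y) (Polynomial.bernoulli n) =
      ∑ k ∈ range (n + 1), (n.choose k : ℂ) * aeval y (Polynomial.bernoulli k) * x ^ (n - k) := by
  have h := congrArg (Polynomial.eval x) (bernoulli_map_comp_add n y)
  simpa [eval_comp, Polynomial.eval_finset_sum, eval_map, ← aeval_def] using h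

lemma eulerPoly0 (n : ℕ) (x : ℂ) : eulerPoly n x =
  (2 : ℂ) ^ (n + 1) / (n + 1) *
    (Polynomial.aeval ((x + 1) / 2) (Polynomial.bernoulli (n + 1)) -
     Polynomial.aeval (x / 2) (Polynomial.bernoulli (n + 1))) := rfl

lemma eulerPoly_add (m : ℕ) (x y : ℂ) :
    eulerPoly m (x + y) = ∑ j ∈ range (m + 1), (m.choose j : ℂ) * eulerPoly j x * y ^ (m - j) := by
  have h1 : (x + y + 1) / 2 = y / 2 + (x + 1) / 2 := by ring
  have h2 : (x + y) / 2 = y / 2 + x / 2 := by ring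
  rw [eulerPoly0, h1, h2, bernoulli_aeval_add, bernoulli_aeval_add, ← Finset.sum_sub_distrib,
    Finset.mul_sum, Finset.sum_range_succ']
  have h0 : (2 : ℂ) ^ (m + 1) / (↑m + 1) *
      ((↑((m + 1).choose 0) * aeval ((x + 1) / 2) (Polynomial.bernoulli 0) * (y / 2) ^ (m + 1 - 0)) -
       (↑((m + 1).choose 0) * aeval (x / 2) (Polynomial.bernoulli 0) * (y / 2) ^ (m + 1 - 0))) = 0 := by
    simp [Polynomial.bernoulli_zero]
  rw [h0, add_zero]
  refine Finset.sum_congr rfl fun j hj => ?_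
  have hj' : j ≤ m := Nat.lt_succ_iff.mp (Finset.mem_range.mp hj)
  have e : m + 1 - (j + 1) = m - j := by omega
  rw [e, eulerPoly0]
  have hc : (((m + 1).choose (j + 1) : ℂ)) * (j + 1) = ((m : ℂ) + 1) * (m.choose j) := by
    exact_mod_cast congrArg (Nat.cast : ℕ → ℂ) (Nat.add_one_mul_choose_eq m j).symm
  have hpow : (2 : ℂ) ^ (m + 1) = 2 ^ (j + 1) * 2 ^ (m - j) := by
    rw [← pow_add]; congr 1; omega
  have hm : ((m : ℂ) + 1) ≠ 0 := Nat.cast_add_one_ne_zero m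
  have hjj : ((j : ℂ) + 1) ≠ 0 := Nat.cast_add_one_ne_zero j
  set A := aeval ((x + 1) / 2) (Polynomial.bernoulli (j + 1)) with hA
  set B := aeval (x / 2) (Polynomial.bernoulli (j + 1)) with hB
  rw [hpow, div_pow]
  have h2 : ((2 : ℂ) ^ (m - j)) ≠ 0 := pow_ne_zero _ two_ne_zero
  field_simp
  linear_combination y ^ (m - j) * (A - B) * hc

lemma bernoulli_aeval_one_sub (n : ℕ) (z : ℂ) :
    aeval (1 - z) (Polynomial.bernoulli n) = (-1) ^ n * aeval z (Polynomial.bernoulli n) := by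
  have h := congrArg (aeval z : ℚ[X] → ℂ) (bernoulli_comp_one_sub n)
  simpa [aeval_comp, map_pow] using h

lemma eulerPoly_odd_half (n : ℕ) : eulerPoly (2 * n + 1) (1 / 2 : ℂ) = 0 := by
  rw [eulerPoly0]
  have h34 : ((1 : ℂ) / 2 + 1) / 2 = 1 - (1 / 2 / 2) := by norm_num
  rw [h34, bernoulli_aeval_one_sub]
  rw [show 2 * n + 1 + 1 = 2 * (n + 1) from by ring, pow_mul]
  norm_num
/-- Vanishing sum of alternating Hurwitz zeta values at nonpositive integers:
`∑_{j=0}^{2n+1} (-2/a)^j η(-j,(a+1)/2) / ((2n+1-j)! j!) = 0`, where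
`η(-j,z) = E(j,z)/2` is half the `j`-th Euler polynomial. -/
theorem eta_neg_int_sum (n : ℕ) (a : ℂ) (ha : a ≠ 0) :
    ∑ j ∈ Finset.range (2 * n + 2),
      (-2 / a) ^ j * (eulerPoly j ((a + 1) / 2) / 2) /
        ((Nat.factorial (2 * n + 1 - j) : ℂ) * (Nat.factorial j : ℂ)) = 0 := by
  have h12 : (a + 1) / 2 + (-a / 2) = 1 / 2 := by ring
  have hz : ∑ j ∈ Finset.range (2 * n + 2),
      ((2 * n + 1).choose j : ℂ) * eulerPoly j ((a + 1) / 2) * (-a / 2) ^ (2 * n + 1 - j) = 0 := by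
    have h := eulerPoly_add (2 * n + 1) ((a + 1) / 2) (-a / 2)
    rw [h12, eulerPoly_odd_half] at h
    exact h.symm
  have key : ∀ j ∈ Finset.range (2 * n + 2),
      (-2 / a) ^ j * (eulerPoly j ((a + 1) / 2) / 2) /
        ((Nat.factorial (2 * n + 1 - j) : ℂ) * (Nat.factorial j : ℂ)) =
      ((-2 / a) ^ (2 * n + 1) / (2 * ((2 * n + 1).factorial : ℂ))) *
        (((2 * n + 1).choose j : ℂ) * eulerPoly j ((a + 1) / 2) * (-a / 2) ^ (2 * n + 1 - j)) := by
    intro j hj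
    have hjm : j ≤ 2 * n + 1 := by have := Finset.mem_range.mp hj; omega
    set E := eulerPoly j ((a + 1) / 2) with hE
    have hfact : (((2 * n + 1).factorial : ℂ)) =
        (((2 * n + 1).choose j : ℂ)) * (j.factorial : ℂ) * (((2 * n + 1 - j).factorial : ℂ)) := by
      exact_mod_cast congrArg (Nat.cast : ℕ → ℂ)
        (Nat.choose_mul_factorial_mul_factorial hjm).symm
    have hsplit : (-2 / a) ^ (2 * n + 1) = (-2 / a) ^ j * (-2 / a) ^ (2 * n + 1 - j) := by
      rw [← pow_add]; congr 1; omega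
    have hone : ((-2 / a) * (-a / 2)) = 1 := by field_simp
    have hone' : (-2 / a) ^ (2 * n + 1 - j) * (-a / 2) ^ (2 * n + 1 - j) = 1 := by
      rw [← mul_pow, hone, one_pow]
    have hF1 : (((2 * n + 1 - j).factorial : ℂ)) ≠ 0 :=
      Nat.cast_ne_zero.mpr (Nat.factorial_ne_zero _)
    have hF2 : ((j.factorial : ℂ)) ≠ 0 := Nat.cast_ne_zero.mpr (Nat.factorial_ne_zero _)
    have hM : (((2 * n + 1).factorial : ℂ)) ≠ 0 :=
      Nat.cast_ne_zero.mpr (Nat.factorial_ne_zero _)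
    have hB1 : (2 : ℂ) * (((2 * n + 1 - j).factorial : ℂ) * (j.factorial : ℂ)) ≠ 0 :=
      mul_ne_zero two_ne_zero (mul_ne_zero hF1 hF2)
    have hB2 : (2 : ℂ) * (((2 * n + 1).factorial : ℂ)) ≠ 0 := mul_ne_zero two_ne_zero hM
    rw [show (-2 / a) ^ j * (E / 2) / (((2 * n + 1 - j).factorial : ℂ) * (j.factorial : ℂ))
        = ((-2 / a) ^ j * E) / (2 * (((2 * n + 1 - j).factorial : ℂ) * (j.factorial : ℂ))) from by
          ring,
      show ((-2 / a) ^ (2 * n + 1) / (2 * (((2 * n + 1).factorial : ℂ)))) *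
          (((2 * n + 1).choose j : ℂ) * E * (-a / 2) ^ (2 * n + 1 - j))
        = ((-2 / a) ^ (2 * n + 1) * (((2 * n + 1).choose j : ℂ) * E * (-a / 2) ^ (2 * n + 1 - j))) /
            (2 * (((2 * n + 1).factorial : ℂ))) from by ring,
      div_eq_div_iff hB1 hB2, hfact, hsplit]
    linear_combination (-((-2 / a) ^ j * E * 2 * (((2 * n + 1).choose j : ℂ)) * (j.factorial : ℂ) *
      (((2 * n + 1 - j).factorial : ℂ)))) * hone'
  rw [Finset.sum_congr rfl key, ← Finset.mul_sum, hz, mul_zero]
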